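/- Let z be a positive irrational real number. If (m1,k1) and (m2,k2) are pairs of positive integers with m1*k1*z^2 - 2*(k1-m1)*z - 2 = m2*k2*z^2 - 2*(k2-m2)*z - 2, then m1 = m2 and k1 = k2. -/
import Mathlib

theorem stmt_0 (z : ℝ) (hz : 0 < z) (hirr : Irrational z)
    (m1 k1 m2 k2 : ℤ) (hm1 : 0 < m1) (hk1 : 0 < k1) (hm2 : 0 < m2) (hk2 : 0 < k2)
    (h : (m1 : ℝ) * (k1 : ℝ) * z ^ 2 - 2 * ((k1 : ℝ) - (m1 : ℝ)) * z - 2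
       = (m2 : ℝ) * (k2 : ℝ) * z ^ 2 - 2 * ((k2 : ℝ) - (m2 : ℝ)) * z - 2) :
    m1 = m2 ∧ k1 = k2 := by
  set a : ℤ := m1 * k1 - m2 * k2 with ha
  set b : ℤ := (k1 - m1) - (k2 - m2) with hb
  have h1 : (a : ℝ) * z = 2 * b := by
    have hz' : z ≠ 0 := ne_of_gt hz
    have : (a : ℝ) * z ^ 2 = 2 * b * z := by push_cast [ha, hb]; ring_nf; nlinarith [h]
    field_simp at this ⊢
    nlinarith [this]
  have ha0 : a = 0 := by
    by_contra h0
    have : z = 2 * b / a := by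
      field_simp at h1 ⊢
      · linarith [h1]
    have : ¬ Irrational z := by
      rw [this]
      push_cast
      rw [show ((2:ℝ) * b / a) = ((2 * b / a : ℚ) : ℝ) by push_cast; ring]
      exact Rat.not_irrational _
    exact this hirr
  have hb0 : b = 0 := by
    have hbr : (b : ℝ) = 0 := by rw [ha0] at h1; push_cast at h1; linarith
    exact_mod_cast hbr
  have hprod : m1 * k1 = m2 * k2 := by omega
  have hdiff : k1 - m1 = k2 - m2 := by omega
  constructor <;> nlinarith [hprod, hdiff, hm1, hm2, hk1, hk2]
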